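/- Let (R, m) be a finite local ring with principal maximal ideal m = (m₀), residue field of cardinality q, and index of nilpotency e = q + 1. Then Z(m) = (x, m₀)^e + (x^q - m₀^{q-1} x). -/

import Mathlib

open Polynomial IsLocalRing

/-- The ideal of polynomials in `R[X]` mapping every element of `S` into the ideal `I`. -/
def zeroFunctionsInto {R : Type*} [CommRing R] (S : Set R) (I : Ideal R) : Ideal R[X] where
  carrier := {f | ∀ s ∈ S, f.eval s ∈ I}
  add_mem' := fun hf hg s hs => by simpa using I.add_mem (hf s hs) (hg s hs)
  zero_mem' := fun s _ => by simp
  smul_mem' := fun c f hf s hs => by simpa using I.mul_mem_left (c.eval s) (hf s hs)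

/-- The ideal of polynomials vanishing on the subset `S`. -/
def zeroFunctions {R : Type*} [CommRing R] (S : Set R) : Ideal R[X] :=
  zeroFunctionsInto S ⊥

section Aux
variable {R : Type*} [CommRing R] [Finite R] [IsLocalRing R]

/-- Annihilator lemma: if `m₀^{q+1-j} * x = 0` then `x ∈ m^j`. -/
lemma annA (m₀ : R) (hm : maximalIdeal R = Ideal.span {m₀}) (q : ℕ)
    (hq : maximalIdeal R ^ q ≠ ⊥) :
    ∀ j, j ≤ q + 1 → ∀ x : R, m₀ ^ (q + 1 - j) * x = 0 → x ∈ maximalIdeal R ^ j := by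
  intro j
  induction j with
  | zero => intro _ x _; simp
  | succ j ih =>
    intro hj x hx
    have hj' : j ≤ q := by omega
    have h1 : m₀ ^ (q + 1 - j) * x = 0 := by
      have h2 : m₀ ^ (q + 1 - j) * x = m₀ * (m₀ ^ (q + 1 - (j + 1)) * x) := by
        rw [show q + 1 - j = (q + 1 - (j + 1)) + 1 by omega]; ring
      rw [h2, hx, mul_zero]
    have hxj := ih (by omega) x h1
    rw [hm, Ideal.span_singleton_pow, Ideal.mem_span_singleton] at hxj
    obtain ⟨y, hy⟩ := hxj
    have hqy : m₀ ^ q * y = 0 := by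
      have : m₀ ^ (q + 1 - (j + 1)) * (m₀ ^ j * y) = m₀ ^ q * y := by
        rw [show q + 1 - (j + 1) = q - j by omega, ← mul_assoc, ← pow_add,
          show q - j + j = q by omega]
      rw [hy] at hx; rw [this] at hx; exact hx
    have hym : y ∈ maximalIdeal R := by
      by_contra hu
      have hu' : IsUnit y := by
        rw [mem_maximalIdeal] at hu
        exact not_not.mp hu
      have : m₀ ^ q = 0 := by
        obtain ⟨u, rfl⟩ := hu'
        exact (Units.mul_left_eq_zero u).mp (by rw [mul_comm] at hqy ⊢; exact hqy)
      apply hq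
      rw [hm, Ideal.span_singleton_pow, this, Ideal.span_singleton_eq_bot.mpr rfl]
    rw [hm, Ideal.mem_span_singleton] at hym
    obtain ⟨z, hz⟩ := hym
    rw [hm, Ideal.span_singleton_pow, Ideal.mem_span_singleton]
    exact ⟨z, by rw [hy, hz, pow_succ]; ring⟩

/-- Main coefficient lemma by induction on `k`. -/
lemma coeffE (m₀ : R) (hm : maximalIdeal R = Ideal.span {m₀})
    (q : ℕ) (hq : Nat.card (ResidueField R) = q)
    (hqnil : maximalIdeal R ^ q ≠ ⊥) :
    ∀ k, k ≤ q + 1 → ∀ c : ℕ → R,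
      (∀ t : R, ∑ i ∈ Finset.range q, c i * t ^ i = 0) →
      ∀ i, i < q → c i ∈ maximalIdeal R ^ k := by
  have hK : Finite (ResidueField R) := Finite.of_surjective _ residue_surjective
  haveI : Fintype (ResidueField R) := Fintype.ofFinite _
  have hcard : Fintype.card (ResidueField R) = q := by
    rw [← Nat.card_eq_fintype_card, hq]
  have hq1 : 1 ≤ q := by
    rw [← hcard]; exact Fintype.card_pos
  intro k
  induction k with
  | zero => intro _ c _ i _; simp
  | succ k ih =>
    intro hk c hc i hi
    have hck : ∀ i, i < q → c i ∈ maximalIdeal R ^ k := ih (by omega) c hc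
    have hch : ∀ j, ∃ y, j < q → c j = m₀ ^ k * y := by
      intro j
      by_cases hj : j < q
      · have := hck j hj
        rw [hm, Ideal.span_singleton_pow, Ideal.mem_span_singleton] at this
        obtain ⟨y, hy⟩ := this
        exact ⟨y, fun _ => hy⟩
      · exact ⟨0, fun h => absurd h hj⟩
    choose d hd using hch
    -- key: ∀ t, ∑ d i t^i ∈ maximalIdeal
    have hdm : ∀ t : R, (∑ i ∈ Finset.range q, d i * t ^ i) ∈ maximalIdeal R := by
      intro t
      have h0 : m₀ ^ k * (∑ i ∈ Finset.range q, d i * t ^ i) = 0 := by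
        rw [Finset.mul_sum]
        rw [← hc t]
        apply Finset.sum_congr rfl
        intro j hj
        rw [hd j (Finset.mem_range.mp hj)]; ring
      have := annA m₀ hm q hqnil (q + 1 - k) (by omega) _
        (by rw [show q + 1 - (q + 1 - k) = k by omega]; exact h0)
      have hle : maximalIdeal R ^ (q + 1 - k) ≤ maximalIdeal R := by
        conv_rhs => rw [← pow_one (maximalIdeal R)]
        exact Ideal.pow_le_pow_right (by omega)
      exact hle this
    -- residue field polynomial
    set K := ResidueField R
    set g : K[X] := ∑ i ∈ Finset.range q, C (residue R (d i)) * X ^ i with hg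
    have hgeval : ∀ x : K, g.eval x = 0 := by
      intro x
      obtain ⟨t, rfl⟩ := residue_surjective (R := R) x
      have : g.eval (residue R t) = residue R (∑ i ∈ Finset.range q, d i * t ^ i) := by
        rw [hg]
        simp [eval_finset_sum, map_sum]
      rw [this, ← map_zero (residue R)]
      exact (Ideal.Quotient.eq_zero_iff_mem.mpr (hdm t)).trans (map_zero _).symm
    have hgdeg : g.natDegree < q := by
      apply Nat.lt_of_le_of_lt (Polynomial.natDegree_sum_le_of_forall_le _ _ ?_) (by omega : q - 1 < q)
      intro j hj
      exact (natDegree_C_mul_X_pow_le _ j).trans (by have := Finset.mem_range.mp hj; omega)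
    have hg0 : g = 0 := by
      apply Polynomial.eq_zero_of_natDegree_lt_card_of_eval_eq_zero g Function.injective_id
        (fun x => hgeval x)
      have hcq : q = Fintype.card K := by rw [← Nat.card_eq_fintype_card]; exact hq.symm
      exact hcq ▸ hgdeg
    have hcoeff : residue R (d i) = 0 := by
      have : g.coeff i = residue R (d i) := by
        rw [hg, Polynomial.finset_sum_coeff]
        rw [Finset.sum_eq_single i]
        · simp
        · intro j hj hji
          simp [coeff_C_mul, coeff_X_pow, hji.symm]
        · intro h; exact absurd (Finset.mem_range.mpr hi) h
      rw [← this, hg0, coeff_zero]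
    have hdi : d i ∈ maximalIdeal R := Ideal.Quotient.eq_zero_iff_mem.mp hcoeff
    have hmk : m₀ ^ k ∈ maximalIdeal R ^ k :=
      Ideal.pow_mem_pow (by rw [hm]; exact Ideal.mem_span_singleton_self m₀) k
    rw [hd i hi, pow_succ]
    exact Ideal.mul_mem_mul hmk hdi

end Aux

lemma mem_zeroFunctions {R : Type*} [CommRing R] {S : Set R} {f : R[X]} :
    f ∈ zeroFunctions S ↔ ∀ s ∈ S, f.eval s = 0 := by
  constructor
  · intro h s hs
    simpa using h s hs
  · intro h s hs
    simp [h s hs]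

theorem statement_18 {R : Type*} [CommRing R] [Finite R] [IsLocalRing R]
    (m₀ : R) (hm : maximalIdeal R = Ideal.span {m₀})
    (q : ℕ) (hq : Nat.card (ResidueField R) = q)
    (e : ℕ) (he : 1 ≤ e) (hnil : maximalIdeal R ^ e = ⊥)
    (hnil' : maximalIdeal R ^ (e - 1) ≠ ⊥) (heq : e = q + 1) :
    zeroFunctions (maximalIdeal R : Set R) =
      (Ideal.span {(X : R[X]), C m₀}) ^ e ⊔
        Ideal.span {(X : R[X]) ^ q - C (m₀ ^ (q - 1)) * X} := by
  subst heq
  have hqnil : maximalIdeal R ^ q ≠ ⊥ := by simpa using hnil'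
  haveI hK : Finite (ResidueField R) := Finite.of_surjective _ residue_surjective
  haveI : Fintype (ResidueField R) := Fintype.ofFinite _
  have hcard : Fintype.card (ResidueField R) = q := by rw [← Nat.card_eq_fintype_card, hq]
  have hq2 : 2 ≤ q := by
    rw [← hcard]
    exact Fintype.one_lt_card
  have hm₀ : m₀ ∈ maximalIdeal R := hm ▸ Ideal.mem_span_singleton_self m₀
  have hm0q : m₀ ^ (q + 1) = 0 := by
    have h1 : m₀ ^ (q + 1) ∈ maximalIdeal R ^ (q + 1) := Ideal.pow_mem_pow hm₀ _
    rw [hnil] at h1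
    exact h1
  have hfrob : ∀ t : R, t ^ q - t ∈ maximalIdeal R := by
    intro t
    have h2 : (residue R t) ^ q = residue R t := by
      rw [← hcard]; exact FiniteField.pow_card _
    have h0 : residue R (t ^ q - t) = 0 := by
      rw [map_sub, map_pow, h2, sub_self]
    exact Ideal.Quotient.eq_zero_iff_mem.mp h0
  have hpz : ∀ z ∈ maximalIdeal R, z ^ q - m₀ ^ (q - 1) * z = 0 := by
    intro z hz
    rw [hm, Ideal.mem_span_singleton] at hz
    obtain ⟨t, rfl⟩ := hz
    obtain ⟨u, hu⟩ := Ideal.mem_span_singleton.mp (hm ▸ hfrob t)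
    have h3 : (m₀ * t) ^ q - m₀ ^ (q - 1) * (m₀ * t) = m₀ ^ q * (t ^ q - t) := by
      rw [mul_pow, mul_sub]
      congr 1
      rw [← mul_assoc, ← pow_succ, show q - 1 + 1 = q by omega]
    rw [h3, hu, ← mul_assoc, ← pow_succ, hm0q, zero_mul]
  set Z := zeroFunctions (maximalIdeal R : Set R) with hZ
  set J : Ideal R[X] := Ideal.span {(X : R[X]), C m₀} with hJdef
  set P : Ideal R[X] := Ideal.span {(X : R[X]) ^ q - C (m₀ ^ (q - 1)) * X} with hPdef
  have hX : (X : R[X]) ∈ J := Ideal.subset_span (by simp)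
  have hC : (C m₀ : R[X]) ∈ J := Ideal.subset_span (by simp)
  apply le_antisymm
  · -- hard direction
    intro f hf
    rw [hZ, mem_zeroFunctions] at hf
    set p : R[X] := X ^ q - C (m₀ ^ (q - 1)) * X with hp
    have hmonic : p.Monic := by
      have hdeg : (C (m₀ ^ (q - 1)) * X).degree < ((q : ℕ) : WithBot ℕ) := by
        refine lt_of_le_of_lt (degree_C_mul_X_le _) ?_
        exact_mod_cast (by omega : 1 < q)
      exact monic_X_pow_sub hdeg
    have hpP : p ∈ P := Ideal.subset_span rfl
    have hpne1 : p ≠ 1 := by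
      intro h
      have h0 : p.eval 0 = 0 := by
        rw [hp]; simp [zero_pow (by omega : q ≠ 0)]
      rw [h] at h0
      simp at h0
    have hpdeg : p.natDegree = q := by
      rw [hp]
      rw [natDegree_sub_eq_left_of_natDegree_lt]
      · exact natDegree_X_pow q
      · rw [natDegree_X_pow]
        have h4 : (C (m₀ ^ (q - 1)) * X).natDegree ≤ 1 :=
          natDegree_le_iff_degree_le.mpr (degree_C_mul_X_le _)
        omega
    have rdeg : (f %ₘ p).natDegree < q := by
      have := natDegree_modByMonic_lt f hmonic hpne1
      rwa [hpdeg] at this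
    have hdiv : f %ₘ p = f - p * (f /ₘ p) := by
      have h5 := modByMonic_add_div f p
      linear_combination h5
    have hrz : ∀ z ∈ maximalIdeal R, (f %ₘ p).eval z = 0 := by
      intro z hz
      have hpz' : p.eval z = 0 := by
        rw [hp]; simpa using hpz z hz
      rw [hdiv, eval_sub, eval_mul, hpz', hf z hz, zero_mul, sub_zero]
    have hre : ∀ i, i < q → (f %ₘ p).coeff i ∈ maximalIdeal R ^ (q + 1 - i) := by
      intro i hi
      have hsum : ∀ t : R, ∑ j ∈ Finset.range q, (f %ₘ p).coeff j * m₀ ^ j * t ^ j = 0 := by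
        intro t
        have h6 : ∑ j ∈ Finset.range q, (f %ₘ p).coeff j * m₀ ^ j * t ^ j
            = (f %ₘ p).eval (m₀ * t) := by
          rw [eval_eq_sum_range' rdeg]
          apply Finset.sum_congr rfl
          intro j _
          rw [mul_pow]; ring
        rw [h6]
        exact hrz (m₀ * t) (Ideal.mul_mem_right t _ hm₀)
      have hcz := coeffE m₀ hm q hq hqnil (q + 1) le_rfl
        (fun j => (f %ₘ p).coeff j * m₀ ^ j) hsum i hi
      rw [hnil] at hcz
      have hcz0 : (f %ₘ p).coeff i * m₀ ^ i = 0 := hcz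
      apply annA m₀ hm q hqnil (q + 1 - i) (by omega)
      rw [show q + 1 - (q + 1 - i) = i by omega, mul_comm]
      exact hcz0
    have hrJ : f %ₘ p ∈ J ^ (q + 1) := by
      rw [Polynomial.as_sum_range' _ q rdeg]
      apply Ideal.sum_mem
      intro i hi
      have hi' := Finset.mem_range.mp hi
      have h7 := hre i hi'
      rw [hm, Ideal.span_singleton_pow, Ideal.mem_span_singleton] at h7
      obtain ⟨u, hu⟩ := h7
      rw [← C_mul_X_pow_eq_monomial, hu]
      have h8 : (C ((m₀ : R) ^ (q + 1 - i) * u) : R[X]) * X ^ i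
          = C u * ((C m₀) ^ (q + 1 - i) * X ^ i) := by
        rw [C_mul, ← C_pow]; ring
      rw [h8]
      apply Ideal.mul_mem_left
      have h9 := Ideal.mul_mem_mul (Ideal.pow_mem_pow hC (q + 1 - i)) (Ideal.pow_mem_pow hX i)
      rwa [← pow_add, show q + 1 - i + i = q + 1 by omega] at h9
    have hfr : f = f %ₘ p + p * (f /ₘ p) := by rw [hdiv]; ring
    rw [hfr]
    apply Ideal.add_mem
    · exact Ideal.mem_sup_left hrJ
    · exact Ideal.mem_sup_right (Ideal.mul_mem_right _ _ hpP)
  · -- easy direction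
    apply sup_le
    · intro f hf
      rw [hZ, mem_zeroFunctions]
      intro z hz
      have h1 : f.eval z ∈ Ideal.map (evalRingHom z) (J ^ (q + 1)) :=
        Ideal.mem_map_of_mem _ hf
      rw [Ideal.map_pow, hJdef, Ideal.map_span] at h1
      have h2 : Ideal.span ((evalRingHom z) '' {(X : R[X]), C m₀}) ≤ maximalIdeal R := by
        rw [Ideal.span_le]
        rintro y ⟨g, hg, rfl⟩
        rcases hg with rfl | rfl
        · simpa using hz
        · simpa using hm₀
      have h3 := Ideal.pow_right_mono h2 (q + 1) h1
      rw [hnil] at h3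
      simpa using h3
    · rw [Ideal.span_le]
      rintro g hg
      rw [Set.mem_singleton_iff] at hg
      subst hg
      rw [SetLike.mem_coe, hZ, mem_zeroFunctions]
      intro z hz
      simpa using hpz z hz
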